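/- The set of sub-checkerboards C is absorbing for the checkerboard-synchronisation IPS Φ_C: for every x ∈ C and every interacting pair u (adjacent or diagonal), Φ_C(x,u) ∈ C. -/
import Mathlib

open scoped Classical

/-- 4-neighbour adjacency on the torus. -/
def adj4 {n₁ n₂ : ℕ} (p q : ZMod n₁ × ZMod n₂) : Prop :=
  q = p + (1, 0) ∨ q = p + (0, 1) ∨ q = p + (-1, 0) ∨ q = p + (0, -1)

/-- Diagonal adjacency on the torus. -/
def diag4 {n₁ n₂ : ℕ} (p q : ZMod n₁ × ZMod n₂) : Prop :=
  q = p + (1, 1) ∨ q = p + (1, -1) ∨ q = p + (-1, 1) ∨ q = p + (-1, -1)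

/-- A cell is isolated if none of its 4-neighbours shares its state. -/
def isolated {n₁ n₂ : ℕ} (x : ZMod n₁ × ZMod n₂ → Bool) (p : ZMod n₁ × ZMod n₂) : Prop :=
  ∀ q : ZMod n₁ × ZMod n₂, adj4 p q → x q ≠ x p

/-- `τ(x,(i,j))`: exchange the states of cells `i` and `j`. -/
def swap {n₁ n₂ : ℕ} (x : ZMod n₁ × ZMod n₂ → Bool) (i j : ZMod n₁ × ZMod n₂) :
    ZMod n₁ × ZMod n₂ → Bool :=
  fun c => if c = i then x j else if c = j then x i else x c

/-- The checkerboard-synchronisation IPS rule `Φ_C`: on an adjacent pair, swap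
iff both cells are non-isolated; on a diagonal pair, always swap. -/
noncomputable def PhiC {n₁ n₂ : ℕ} (x : ZMod n₁ × ZMod n₂ → Bool)
    (i j : ZMod n₁ × ZMod n₂) : ZMod n₁ × ZMod n₂ → Bool :=
  if adj4 i j then
    (if ¬isolated x i ∧ ¬isolated x j then swap x i j else x)
  else if diag4 i j then swap x i j else x

/-- Membership in `C = C_e^0 ∪ C_e^1 ∪ C_o^0 ∪ C_o^1`: some state appears only
on cells of one parity (a "sub-checkerboard"). -/
def InC {n₁ n₂ : ℕ} (x : ZMod n₁ × ZMod n₂ → Bool) : Prop :=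
  (∀ c : ZMod n₁ × ZMod n₂, x c = true → Even (c.1.val + c.2.val)) ∨
  (∀ c : ZMod n₁ × ZMod n₂, x c = true → ¬Even (c.1.val + c.2.val)) ∨
  (∀ c : ZMod n₁ × ZMod n₂, x c = false → Even (c.1.val + c.2.val)) ∨
  (∀ c : ZMod n₁ × ZMod n₂, x c = false → ¬Even (c.1.val + c.2.val))

lemma val_add_one_mod2 {n : ℕ} [NeZero n] (hn : Even n) (a : ZMod n) :
    (a + 1).val % 2 = (a.val + 1) % 2 := by
  have h2 : 2 ∣ n := hn.two_dvd
  have h1 : 1 < n := by have := NeZero.pos n; omega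
  haveI : Fact (1 < n) := ⟨h1⟩
  rw [ZMod.val_add, ZMod.val_one]
  exact Nat.mod_mod_of_dvd _ h2

lemma val_sub_one_mod2 {n : ℕ} [NeZero n] (hn : Even n) (a : ZMod n) :
    (a - 1).val % 2 = (a.val + 1) % 2 := by
  have h := val_add_one_mod2 hn (a - 1)
  rw [sub_add_cancel] at h
  omega

lemma adj_parity {n₁ n₂ : ℕ} [NeZero n₁] [NeZero n₂] (h₁ : Even n₁) (h₂ : Even n₂)
    {p q : ZMod n₁ × ZMod n₂} (h : adj4 p q) :
    (q.1.val + q.2.val) % 2 ≠ (p.1.val + p.2.val) % 2 := by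
  have e1 := val_add_one_mod2 h₁ p.1
  have e2 := val_add_one_mod2 h₂ p.2
  have s1 := val_sub_one_mod2 h₁ p.1
  have s2 := val_sub_one_mod2 h₂ p.2
  rcases h with h | h | h | h <;> subst h <;>
    simp only [Prod.fst_add, Prod.snd_add, add_zero, zero_add,
      ← sub_eq_add_neg] <;> omega

lemma diag_parity {n₁ n₂ : ℕ} [NeZero n₁] [NeZero n₂] (h₁ : Even n₁) (h₂ : Even n₂)
    {p q : ZMod n₁ × ZMod n₂} (h : diag4 p q) :
    (q.1.val + q.2.val) % 2 = (p.1.val + p.2.val) % 2 := by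
  have e1 := val_add_one_mod2 h₁ p.1
  have e2 := val_add_one_mod2 h₂ p.2
  have s1 := val_sub_one_mod2 h₁ p.1
  have s2 := val_sub_one_mod2 h₂ p.2
  rcases h with h | h | h | h <;> subst h <;>
    simp only [Prod.fst_add, Prod.snd_add, ← sub_eq_add_neg] <;> omega

/-- a cell whose state lies entirely on one parity class is isolated. -/
lemma iso_of {n₁ n₂ : ℕ} [NeZero n₁] [NeZero n₂] (h₁ : Even n₁) (h₂ : Even n₂)
    (x : ZMod n₁ × ZMod n₂ → Bool) (b : Bool) (r : ℕ)
    (H : ∀ c : ZMod n₁ × ZMod n₂, x c = b → (c.1.val + c.2.val) % 2 = r)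
    (p : ZMod n₁ × ZMod n₂) (hp : x p = b) : isolated x p := by
  intro q hq heq
  exact adj_parity h₁ h₂ hq ((H q (heq.trans hp)).trans (H p hp).symm)

lemma InC_swap {n₁ n₂ : ℕ} (x : ZMod n₁ × ZMod n₂ → Bool) (i j : ZMod n₁ × ZMod n₂)
    (hpar : (i.1.val + i.2.val) % 2 = (j.1.val + j.2.val) % 2)
    (hx : InC x) : InC (swap x i j) := by
  have key : ∀ (P : ZMod n₁ × ZMod n₂ → Prop) (v : Bool), (P i ↔ P j) →
      (∀ c, x c = v → P c) → ∀ c, swap x i j c = v → P c := by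
    intro P v hij H c hc
    unfold swap at hc
    split_ifs at hc with h1 h2
    · subst h1; exact hij.mpr (H j hc)
    · subst h2; exact hij.mp (H i hc)
    · exact H c hc
  have hiff : (Even (i.1.val + i.2.val) ↔ Even (j.1.val + j.2.val)) := by
    rw [Nat.even_iff, Nat.even_iff, hpar]
  rcases hx with H | H | H | H
  · exact Or.inl (key _ true hiff H)
  · exact Or.inr (Or.inl (key _ true (not_congr hiff) H))
  · exact Or.inr (Or.inr (Or.inl (key _ false hiff H)))
  · exact Or.inr (Or.inr (Or.inr (key _ false (not_congr hiff) H)))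

/-- on an even-sized grid, the set `C` of sub-checkerboards is
absorbing for `Φ_C`: for every `x ∈ C` and every interacting pair (adjacent or
diagonal), `Φ_C(x,u) ∈ C`. -/
theorem C_absorbing
    (n₁ n₂ : ℕ) [NeZero n₁] [NeZero n₂] (h₁ : Even n₁) (h₂ : Even n₂)
    (x : ZMod n₁ × ZMod n₂ → Bool) (hx : InC x)
    (i j : ZMod n₁ × ZMod n₂) (hu : adj4 i j ∨ diag4 i j) :
    InC (PhiC x i j) := by
  unfold PhiC
  split_ifs with hadj hiso hdiag
  · -- adjacent, both non-isolated: in fact x i = x j, so swap x i j = x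
    have hxij : x i = x j := by
      by_contra hne
      -- one of the endpoints has the "checkerboard" state and is thus isolated
      have key : ∀ (b : Bool) (r : ℕ),
          (∀ c : ZMod n₁ × ZMod n₂, x c = b → (c.1.val + c.2.val) % 2 = r) → False := by
        intro b r H
        rcases Bool.eq_or_eq_not (x i) b with hib | hib
        · exact hiso.1 (iso_of h₁ h₂ x b r H i hib)
        · have hjb : x j = b := by
            cases b <;> cases hb : x j <;> simp_all
          exact hiso.2 (iso_of h₁ h₂ x b r H j hjb)
      rcases hx with H | H | H | H
      · exact key true 0 (fun c hc => Nat.even_iff.mp (H c hc))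
      · exact key true 1 (fun c hc => Nat.odd_iff.mp (Nat.not_even_iff_odd.mp (H c hc)))
      · exact key false 0 (fun c hc => Nat.even_iff.mp (H c hc))
      · exact key false 1 (fun c hc => Nat.odd_iff.mp (Nat.not_even_iff_odd.mp (H c hc)))
    have : swap x i j = x := by
      funext c
      unfold swap
      split_ifs with hc1 hc2
      · rw [hc1, hxij]
      · rw [hc2, hxij]
      · rfl
    rw [this]; exact hx
  · exact hx
  · exact InC_swap x i j (diag_parity h₁ h₂ hdiag).symm hx
  · exact hx
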